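/- Every finite-dimensional representation V of a quiver Q admits at most one filtration 0 = V⁰ ⊂ V¹ ⊂ … ⊂ V^ℓ = V such that each successive quotient W^i = V^i/V^{i−1} is μ-semistable and μ(dim W^1) > μ(dim W^2) > … > μ(dim W^ℓ) (uniqueness of the Harder–Narasimhan filtration). -/

import Mathlib

open Module

namespace QT

/-- A (finite) quiver: finite sets of vertices and arrows, with source and target maps. -/
structure Quiv where
  V : Type
  A : Type
  [fv : Fintype V]
  [fa : Fintype A]
  s : A → V
  t : A → V

attribute [instance] Quiv.fv Quiv.fa

/-- The Euler form of a quiver. -/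
def eulerForm (Q : Quiv) (d e : Q.V → ℤ) : ℤ :=
  (∑ i, d i * e i) - ∑ a, d (Q.s a) * e (Q.t a)

/-- The Kac form: symmetrization of the Euler form. -/
def kacForm (Q : Quiv) (d e : Q.V → ℤ) : ℤ :=
  eulerForm Q d e + eulerForm Q e d

/-- Cast a dimension vector to an integral vector. -/
def castN {Q : Quiv} (d : Q.V → ℕ) : Q.V → ℤ := fun i => (d i : ℤ)

/-- A finite-dimensional representation of a quiver over a field `k`. -/
structure Rep (Q : Quiv) (k : Type) [Field k] where
  M : Q.V → Type
  [acg : ∀ i, AddCommGroup (M i)]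
  [mod : ∀ i, Module k (M i)]
  [fd : ∀ i, FiniteDimensional k (M i)]
  f : ∀ a, M (Q.s a) →ₗ[k] M (Q.t a)

attribute [instance] Rep.acg Rep.mod Rep.fd

/-- The dimension vector of a representation. -/
noncomputable def dimVec {Q : Quiv} {k : Type} [Field k] (V : Rep Q k) : Q.V → ℕ :=
  fun i => finrank k (V.M i)

/-- The standard linear map whose kernel is `Hom(V,W)` and whose cokernel is `Ext¹(V,W)`. -/
def Phi {Q : Quiv} {k : Type} [Field k] (V W : Rep Q k) :
    (∀ i, V.M i →ₗ[k] W.M i) →ₗ[k] (∀ a, V.M (Q.s a) →ₗ[k] W.M (Q.t a)) where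
  toFun φ := fun a => W.f a ∘ₗ φ (Q.s a) - φ (Q.t a) ∘ₗ V.f a
  map_add' φ ψ := by
    funext a
    simp only [Pi.add_apply, LinearMap.comp_add, LinearMap.add_comp]
    abel
  map_smul' c φ := by
    funext a
    simp only [Pi.smul_apply, LinearMap.comp_smul, LinearMap.smul_comp, RingHom.id_apply,
      smul_sub]

/-- A subrepresentation, given as a compatible family of submodules. -/
structure Subrep {Q : Quiv} {k : Type} [Field k] (V : Rep Q k) where
  S : ∀ i, Submodule k (V.M i)
  compat : ∀ a, ∀ x ∈ S (Q.s a), V.f a x ∈ S (Q.t a)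

/-- Dimension vector of a subrepresentation. -/
noncomputable def Subrep.dim {Q : Quiv} {k : Type} [Field k] {V : Rep Q k} (T : Subrep V) : Q.V → ℕ :=
  fun i => finrank k (T.S i)

/-- Pointwise containment of subrepresentations. -/
def SubrepLE {Q : Quiv} {k : Type} [Field k] {V : Rep Q k} (T T' : Subrep V) : Prop :=
  ∀ i, T.S i ≤ T'.S i

/-- The zero subrepresentation. -/
def botSub {Q : Quiv} {k : Type} [Field k] (V : Rep Q k) : Subrep V :=
  ⟨fun _ => ⊥, by intro a x hx; simp only [Submodule.mem_bot] at hx ⊢; simp [hx]⟩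

/-- The full subrepresentation. -/
def topSub {Q : Quiv} {k : Type} [Field k] (V : Rep Q k) : Subrep V :=
  ⟨fun _ => ⊤, by intro a x _; trivial⟩

/-- The slope `μ(e) = θ(e)/(a·e)` of an integral vector. -/
def slopeZ {Q : Quiv} (θ : Q.V → ℤ) (a : Q.V → ℕ) (e : Q.V → ℤ) : ℚ :=
  (∑ i, (θ i : ℚ) * (e i : ℚ)) / ∑ i, (a i : ℚ) * (e i : ℚ)

/-- The slope of a dimension vector. -/
def slope {Q : Quiv} (θ : Q.V → ℤ) (a : Q.V → ℕ) (e : Q.V → ℕ) : ℚ :=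
  slopeZ θ a (castN e)

/-- Dimension vector of the subquotient `T'/T`. -/
noncomputable def quotDim {Q : Quiv} {k : Type} [Field k] {V : Rep Q k} (T T' : Subrep V) : Q.V → ℤ :=
  fun i => (T'.dim i : ℤ) - (T.dim i : ℤ)

/-- `μ`-semistability of a representation. -/
def IsSemistable {Q : Quiv} {k : Type} [Field k] (θ : Q.V → ℤ) (a : Q.V → ℕ)
    (V : Rep Q k) : Prop :=
  ∀ T : Subrep V, T.dim ≠ 0 → slope θ a T.dim ≤ slope θ a (dimVec V)

/-- `μ`-semistability of the subquotient `T'/T`, expressed via intermediate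
subrepresentations (which correspond to subrepresentations of `T'/T`). -/
def IsSemistableQuot {Q : Quiv} {k : Type} [Field k] {V : Rep Q k} (θ : Q.V → ℤ)
    (a : Q.V → ℕ) (T T' : Subrep V) : Prop :=
  ∀ U : Subrep V, SubrepLE T U → SubrepLE U T' → U.dim ≠ T.dim →
    slopeZ θ a (quotDim T U) ≤ slopeZ θ a (quotDim T T')

/-- A Harder–Narasimhan filtration of `V` of length `ℓ`. -/
structure IsHNFiltration {Q : Quiv} {k : Type} [Field k] (θ : Q.V → ℤ) (a : Q.V → ℕ)
    (V : Rep Q k) (ℓ : ℕ) (F : Fin (ℓ + 1) → Subrep V) : Prop where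
  zero : F 0 = botSub V
  last : F (Fin.last ℓ) = topSub V
  mono : ∀ i : Fin ℓ, SubrepLE (F i.castSucc) (F i.succ)
  proper : ∀ i : Fin ℓ, (F i.castSucc).dim ≠ (F i.succ).dim
  semistable : ∀ i : Fin ℓ, IsSemistableQuot θ a (F i.castSucc) (F i.succ)
  slopes : ∀ i j : Fin ℓ, i < j →
    slopeZ θ a (quotDim (F j.castSucc) (F j.succ)) <
      slopeZ θ a (quotDim (F i.castSucc) (F i.succ))

/-- `e` is a general subdimension vector of `d`: every representation of dimension
vector `d` (over `ℂ`) admits a subrepresentation of dimension vector `e`. -/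
def GeneralSub (Q : Quiv) (e d : Q.V → ℕ) : Prop :=
  e ≤ d ∧ ∀ V : Rep Q ℂ, dimVec V = d → ∃ T : Subrep V, T.dim = e

/-- `f` is a general quotient dimension vector of `d`: every representation of
dimension vector `d` admits a quotient of dimension vector `f`, equivalently a
subrepresentation of dimension vector `d - f`. -/
def GeneralQuot (Q : Quiv) (d f : Q.V → ℕ) : Prop :=
  f ≤ d ∧ ∀ V : Rep Q ℂ, dimVec V = d → ∃ T : Subrep V, T.dim = fun i => d i - f i

/-- The set of values `dim Ext¹(V,W)` for `V,W` of dimension vectors `d,d'`. -/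
def extSet (Q : Quiv) (d d' : Q.V → ℕ) : Set ℕ :=
  {n | ∃ (V : Rep Q ℂ) (W : Rep Q ℂ), dimVec V = d ∧ dimVec W = d' ∧
    n = finrank ℂ ((∀ a, V.M (Q.s a) →ₗ[ℂ] W.M (Q.t a)) ⧸ LinearMap.range (Phi V W))}

/-- The general (minimal) dimension of `Ext¹` between representations of
dimension vectors `d` and `d'`. -/
noncomputable def extDim (Q : Quiv) (d d' : Q.V → ℕ) : ℕ := sInf (extSet Q d d')

/-- The set of values `dim Hom(V,W)` for `V,W` of dimension vectors `d,d'`. -/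
def homSet (Q : Quiv) (d d' : Q.V → ℕ) : Set ℕ :=
  {n | ∃ (V : Rep Q ℂ) (W : Rep Q ℂ), dimVec V = d ∧ dimVec W = d' ∧
    n = finrank ℂ (LinearMap.ker (Phi V W))}

/-- The general (minimal) dimension of `Hom` between representations of
dimension vectors `d` and `d'`. -/
noncomputable def homDim (Q : Quiv) (d d' : Q.V → ℕ) : ℕ := sInf (homSet Q d d')

/-- Direct sum of a finite family of representations. -/
def dsum {Q : Quiv} {k : Type} [Field k] {n : ℕ} (F : Fin n → Rep Q k) : Rep Q k where
  M i := ∀ j, (F j).M i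
  f a := LinearMap.pi fun j => (F j).f a ∘ₗ LinearMap.proj j

/-- Isomorphism of representations. -/
def RepIso {Q : Quiv} {k : Type} [Field k] (V W : Rep Q k) : Prop :=
  ∃ φ : ∀ i, V.M i ≃ₗ[k] W.M i,
    ∀ a, ∀ x : V.M (Q.s a), φ (Q.t a) (V.f a x) = W.f a (φ (Q.s a) x)

/-- A representation is nonzero if its dimension vector is nonzero. -/
def RepNonzero {Q : Quiv} {k : Type} [Field k] (V : Rep Q k) : Prop :=
  dimVec V ≠ 0

/-- A representation is indecomposable if it is nonzero and not isomorphic to the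
direct sum of two nonzero representations. -/
def Indecomposable {Q : Quiv} {k : Type} [Field k] (V : Rep Q k) : Prop :=
  RepNonzero V ∧ ∀ A B : Rep Q k, RepNonzero A → RepNonzero B → ¬ RepIso V (dsum ![A, B])

/-- The `m`-Kronecker quiver: two vertices and `m` arrows from vertex `0` to vertex `1`. -/
def kronecker (m : ℕ) : Quiv where
  V := Fin 2
  A := Fin m
  s := fun _ => 0
  t := fun _ => 1

/-- A quiver is acyclic if it has no directed cycles. -/
def Acyclic (Q : Quiv) : Prop :=
  ∀ i : Q.V, ¬ Relation.TransGen (fun i j => ∃ a, Q.s a = i ∧ Q.t a = j) i i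

/-- A representation of dimension vector `e` which is semistable exists. -/
def HasSemistableRep (Q : Quiv) (θ : Q.V → ℤ) (a : Q.V → ℕ) (e : Q.V → ℕ) : Prop :=
  ∃ V : Rep Q ℂ, dimVec V = e ∧ IsSemistable θ a V

/-- A Harder–Narasimhan type: a nonempty list of nonzero semistable dimension vectors
summing to `d`, with strictly decreasing slopes. -/
def IsHNType (Q : Quiv) (θ : Q.V → ℤ) (a : Q.V → ℕ) (d : Q.V → ℕ)
    (L : List (Q.V → ℕ)) : Prop :=
  L ≠ [] ∧ (∀ e ∈ L, e ≠ 0 ∧ HasSemistableRep Q θ a e) ∧ L.sum = d ∧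
    L.Chain' (fun e e' => slope θ a e' < slope θ a e)


section HNUnique

private lemma mediant_le' {x y p q c : ℚ} (hp : 0 < p) (hq : 0 < q)
    (h1 : x / p ≤ c) (h2 : y / q ≤ c) : (x + y) / (p + q) ≤ c := by
  rw [div_le_iff₀ hp] at h1
  rw [div_le_iff₀ hq] at h2
  rw [div_le_iff₀ (by linarith)]
  nlinarith

private lemma mediant_lt' {x y p q c : ℚ} (hp : 0 < p) (hq : 0 < q)
    (h1 : x / p ≤ c) (h2 : y / q < c) : (x + y) / (p + q) < c := by
  rw [div_le_iff₀ hp] at h1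
  rw [div_lt_iff₀ hq] at h2
  rw [div_lt_iff₀ (by linarith)]
  nlinarith

variable {Q : Quiv} {k : Type} [Field k] {V : Rep Q k}

/-- Numerator of the slope. -/
def Nq (θ : Q.V → ℤ) (e : Q.V → ℤ) : ℚ := ∑ i, (θ i : ℚ) * (e i : ℚ)

/-- Denominator of the slope. -/
def Dq {Q : Quiv} (a : Q.V → ℕ) (e : Q.V → ℤ) : ℚ := ∑ i, (a i : ℚ) * (e i : ℚ)

lemma slopeZ_eq' {Q : Quiv} (θ : Q.V → ℤ) (a : Q.V → ℕ) (e : Q.V → ℤ) :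
    slopeZ θ a e = Nq θ e / Dq a e := rfl

lemma Nq_add {Q : Quiv} (θ : Q.V → ℤ) (e f : Q.V → ℤ) :
    Nq θ (e + f) = Nq θ e + Nq θ f := by
  unfold Nq
  rw [← Finset.sum_add_distrib]
  refine Finset.sum_congr rfl fun i _ => ?_
  simp only [Pi.add_apply]
  push_cast
  ring

lemma Dq_add {Q : Quiv} (a : Q.V → ℕ) (e f : Q.V → ℤ) :
    Dq a (e + f) = Dq a e + Dq a f := by
  unfold Dq
  rw [← Finset.sum_add_distrib]
  refine Finset.sum_congr rfl fun i _ => ?_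
  simp only [Pi.add_apply]
  push_cast
  ring

lemma Subrep.ext' {T T' : Subrep V} (h : ∀ i, T.S i = T'.S i) : T = T' := by
  cases T; cases T'
  simp only [Subrep.mk.injEq]
  exact funext h

lemma dim_mono {T T' : Subrep V} (h : SubrepLE T T') (i : Q.V) : T.dim i ≤ T'.dim i :=
  Submodule.finrank_mono (h i)

lemma eq_of_le_dim_eq {T T' : Subrep V} (h : SubrepLE T T') (hd : T.dim = T'.dim) : T = T' :=
  Subrep.ext' fun i => Submodule.eq_of_le_of_finrank_eq (h i) (congrFun hd i)

/-- Sum of two subrepresentations. -/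
def supS (T T' : Subrep V) : Subrep V where
  S i := T.S i ⊔ T'.S i
  compat a x hx := by
    have hmap : Submodule.map (V.f a) (T.S (Q.s a) ⊔ T'.S (Q.s a)) ≤
        T.S (Q.t a) ⊔ T'.S (Q.t a) := by
      rw [Submodule.map_sup]
      exact sup_le_sup (Submodule.map_le_iff_le_comap.mpr fun y hy => T.compat a y hy)
        (Submodule.map_le_iff_le_comap.mpr fun y hy => T'.compat a y hy)
    exact hmap ⟨x, hx, rfl⟩

/-- Intersection of two subrepresentations. -/
def infS (T T' : Subrep V) : Subrep V where
  S i := T.S i ⊓ T'.S i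
  compat a x hx := ⟨T.compat a x hx.1, T'.compat a x hx.2⟩

lemma quotDim_split {T W U : Subrep V} :
    quotDim T U = quotDim T W + quotDim W U := by
  funext i
  simp only [quotDim, Pi.add_apply]
  ring

lemma Dq_quot_pos {a : Q.V → ℕ} (ha : ∀ i, 0 < a i) {T T' : Subrep V}
    (h : SubrepLE T T') (hne : T'.dim ≠ T.dim) : 0 < Dq a (quotDim T T') := by
  obtain ⟨i0, hi0⟩ := Function.ne_iff.mp hne
  have hlt : T.dim i0 < T'.dim i0 := lt_of_le_of_ne (dim_mono h i0) (Ne.symm hi0)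
  unfold Dq
  apply Finset.sum_pos'
  · intro i _
    have h1 : (T.dim i : ℚ) ≤ (T'.dim i : ℚ) := by exact_mod_cast dim_mono h i
    have h2 : (0:ℚ) ≤ ((quotDim T T' i : ℤ) : ℚ) := by
      simp only [quotDim]
      push_cast
      linarith
    have h3 : (0:ℚ) ≤ (a i : ℚ) := by positivity
    exact mul_nonneg h3 h2
  · refine ⟨i0, Finset.mem_univ i0, ?_⟩
    have h2 : (0:ℚ) < ((quotDim T T' i0 : ℤ) : ℚ) := by
      simp only [quotDim]
      push_cast
      have : (T.dim i0 : ℚ) < (T'.dim i0 : ℚ) := by exact_mod_cast hlt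
      linarith
    have ha0 : (0:ℚ) < (a i0 : ℚ) := by exact_mod_cast ha i0
    exact mul_pos ha0 h2

/-- A relative Harder–Narasimhan filtration, from a subrepresentation `T` up to `V`. -/
structure HNA (θ : Q.V → ℤ) (a : Q.V → ℕ) (T : Subrep V) (ℓ : ℕ)
    (F : Fin (ℓ + 1) → Subrep V) : Prop where
  zero : F 0 = T
  last : F (Fin.last ℓ) = topSub V
  mono : ∀ i : Fin ℓ, SubrepLE (F i.castSucc) (F i.succ)
  proper : ∀ i : Fin ℓ, (F i.castSucc).dim ≠ (F i.succ).dim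
  semistable : ∀ i : Fin ℓ, IsSemistableQuot θ a (F i.castSucc) (F i.succ)
  slopes : ∀ i j : Fin ℓ, i < j →
    slopeZ θ a (quotDim (F j.castSucc) (F j.succ)) <
      slopeZ θ a (quotDim (F i.castSucc) (F i.succ))

lemma HNA.tail {θ : Q.V → ℤ} {a : Q.V → ℕ} {T : Subrep V} {ℓ : ℕ}
    {F : Fin (ℓ + 2) → Subrep V} (hF : HNA θ a T (ℓ + 1) F) :
    HNA θ a (F 1) ℓ (fun i => F i.succ) where
  zero := by
    have h : (0 : Fin (ℓ + 1)).succ = 1 := by ext; simp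
    rw [h]
  last := by
    have h : (Fin.last ℓ).succ = Fin.last (ℓ + 1) := by ext; simp
    rw [h]; exact hF.last
  mono i := by
    have h := hF.mono i.succ
    rwa [← Fin.succ_castSucc] at h
  proper i := by
    have h := hF.proper i.succ
    rwa [← Fin.succ_castSucc] at h
  semistable i := by
    have h := hF.semistable i.succ
    rwa [← Fin.succ_castSucc] at h
  slopes i j hij := by
    have h := hF.slopes i.succ j.succ (by simpa using hij)
    rwa [← Fin.succ_castSucc, ← Fin.succ_castSucc] at h

lemma HNA.base_le {θ : Q.V → ℤ} {a : Q.V → ℕ} {T : Subrep V} {ℓ : ℕ}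
    {F : Fin (ℓ + 1) → Subrep V} (hF : HNA θ a T ℓ F) :
    ∀ j (hj : j < ℓ + 1), SubrepLE T (F ⟨j, hj⟩) := by
  intro j
  induction j with
  | zero =>
    intro hj
    have h0 : (⟨0, hj⟩ : Fin (ℓ + 1)) = 0 := by ext; simp
    rw [h0, hF.zero]
    exact fun i => le_rfl
  | succ j IHj =>
    intro hj
    have hj' : j < ℓ := by omega
    have hmono : SubrepLE (F ⟨j, by omega⟩) (F ⟨j + 1, hj⟩) := hF.mono ⟨j, hj'⟩
    exact fun i => ((IHj (by omega)) i).trans (hmono i)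

/-- Key lemma: the first step of a relative HN filtration is the maximal
destabilizing subrepresentation (above `T`). -/
lemma HNA.key {θ : Q.V → ℤ} {a : Q.V → ℕ} (ha : ∀ i, 0 < a i)
    {T : Subrep V} {ℓ : ℕ} {F : Fin (ℓ + 1) → Subrep V} (hF : HNA θ a T ℓ F)
    (hℓ : 0 < ℓ) (U : Subrep V) (hTU : SubrepLE T U) (hUd : U.dim ≠ T.dim) :
    slopeZ θ a (quotDim T U) ≤ slopeZ θ a (quotDim T (F ⟨1, by omega⟩)) ∧
      (slopeZ θ a (quotDim T U) = slopeZ θ a (quotDim T (F ⟨1, by omega⟩)) →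
        SubrepLE U (F ⟨1, by omega⟩)) := by
  have hcs0 : ((⟨0, hℓ⟩ : Fin ℓ).castSucc) = (0 : Fin (ℓ + 1)) := by ext; simp
  have hF0 : F ((⟨0, hℓ⟩ : Fin ℓ).castSucc) = T := by rw [hcs0, hF.zero]
  have main : ∀ i (hi : i < ℓ + 1) (U : Subrep V), SubrepLE T U → SubrepLE U (F ⟨i, hi⟩) →
      U.dim ≠ T.dim → slopeZ θ a (quotDim T U) ≤ slopeZ θ a (quotDim T (F ⟨1, by omega⟩)) ∧
        (slopeZ θ a (quotDim T U) = slopeZ θ a (quotDim T (F ⟨1, by omega⟩)) →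
          SubrepLE U (F ⟨1, by omega⟩)) := by
    intro i
    induction i with
    | zero =>
      intro hi U hTU hUF hUd
      exfalso
      apply hUd
      have h0 : (⟨0, hi⟩ : Fin (ℓ + 1)) = 0 := by ext; simp
      rw [h0, hF.zero] at hUF
      exact congrArg Subrep.dim (Subrep.ext' fun v => le_antisymm (hUF v) (hTU v))
    | succ i IH =>
      intro hi U hTU hUF hUd
      by_cases hi0 : i = 0
      · subst hi0
        have hsem := hF.semistable ⟨0, hℓ⟩
        rw [hF0] at hsem
        have h1 : slopeZ θ a (quotDim T U) ≤
            slopeZ θ a (quotDim T (F ⟨1, by omega⟩)) := hsem U hTU hUF hUd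
        exact ⟨h1, fun _ => hUF⟩
      -- now i ≥ 1
      by_cases hcase : SubrepLE U (F ⟨i, by omega⟩)
      · exact IH (by omega) U hTU hcase hUd
      · -- U ⊄ F i
        have hTFi : SubrepLE T (F ⟨i, by omega⟩) := hF.base_le i (by omega)
        have hstep : SubrepLE (F ⟨i, by omega⟩) (F ⟨i + 1, hi⟩) := hF.mono ⟨i, by omega⟩
        have hTW : SubrepLE T (infS U (F ⟨i, by omega⟩)) :=
          fun v => le_inf (hTU v) (hTFi v)
        have hWU : SubrepLE (infS U (F ⟨i, by omega⟩)) U := fun v => inf_le_left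
        have hFiU' : SubrepLE (F ⟨i, by omega⟩) (supS U (F ⟨i, by omega⟩)) :=
          fun v => le_sup_right
        have hU'F : SubrepLE (supS U (F ⟨i, by omega⟩)) (F ⟨i + 1, hi⟩) :=
          fun v => sup_le (hUF v) (hstep v)
        have hU'ne : (supS U (F ⟨i, by omega⟩)).dim ≠ (F ⟨i, by omega⟩).dim := by
          intro hEq
          apply hcase
          have heq : F ⟨i, by omega⟩ = supS U (F ⟨i, by omega⟩) :=
            eq_of_le_dim_eq hFiU' hEq.symm
          intro v
          have h1 : U.S v ≤ (supS U (F ⟨i, by omega⟩)).S v := le_sup_left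
          rwa [← heq] at h1
        have hmod : quotDim (F ⟨i, by omega⟩) (supS U (F ⟨i, by omega⟩)) =
            quotDim (infS U (F ⟨i, by omega⟩)) U := by
          funext v
          have hfr := Submodule.finrank_sup_add_finrank_inf_eq (U.S v) ((F ⟨i, by omega⟩).S v)
          simp only [quotDim, Subrep.dim, supS, infS]
          push_cast
          rw [sub_eq_sub_iff_add_eq_add]
          exact_mod_cast hfr
        have hsem : slopeZ θ a (quotDim (F ⟨i, by omega⟩) (supS U (F ⟨i, by omega⟩))) ≤
            slopeZ θ a (quotDim (F ⟨i, by omega⟩) (F ⟨i + 1, hi⟩)) :=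
          hF.semistable ⟨i, by omega⟩ (supS U (F ⟨i, by omega⟩)) hFiU' hU'F hU'ne
        have hslope : slopeZ θ a (quotDim (F ⟨i, by omega⟩) (F ⟨i + 1, hi⟩)) <
            slopeZ θ a (quotDim T (F ⟨1, by omega⟩)) := by
          have h := hF.slopes ⟨0, hℓ⟩ ⟨i, by omega⟩ (by rw [Fin.mk_lt_mk]; omega)
          rwa [hF0] at h
        have hD2 : 0 < Dq a (quotDim (infS U (F ⟨i, by omega⟩)) U) := by
          rw [← hmod]
          exact Dq_quot_pos ha hFiU' hU'ne
        have h2 : slopeZ θ a (quotDim (infS U (F ⟨i, by omega⟩)) U) <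
            slopeZ θ a (quotDim T (F ⟨1, by omega⟩)) := by
          rw [← hmod]
          exact lt_of_le_of_lt hsem hslope
        by_cases hWT : (infS U (F ⟨i, by omega⟩)).dim = T.dim
        · have hWeq : T = infS U (F ⟨i, by omega⟩) := eq_of_le_dim_eq hTW hWT.symm
          have hq : quotDim T U = quotDim (infS U (F ⟨i, by omega⟩)) U := by rw [← hWeq]
          rw [hq]
          exact ⟨le_of_lt h2, fun hEq => absurd hEq (ne_of_lt h2)⟩
        · have hIH := IH (by omega) (infS U (F ⟨i, by omega⟩)) hTW
            (fun v => inf_le_right) hWT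
          have hD1 : 0 < Dq a (quotDim T (infS U (F ⟨i, by omega⟩))) :=
            Dq_quot_pos ha hTW hWT
          have hsplit : quotDim T U = quotDim T (infS U (F ⟨i, by omega⟩)) +
              quotDim (infS U (F ⟨i, by omega⟩)) U := quotDim_split
          have hlt : slopeZ θ a (quotDim T U) <
              slopeZ θ a (quotDim T (F ⟨1, by omega⟩)) := by
            rw [hsplit, slopeZ_eq', Nq_add, Dq_add]
            exact mediant_lt' hD1 hD2 hIH.1 h2
          exact ⟨le_of_lt hlt, fun hEq => absurd hEq (ne_of_lt hlt)⟩
  have hlastle : SubrepLE U (F ⟨ℓ, by omega⟩) := by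
    have hl : (⟨ℓ, by omega⟩ : Fin (ℓ + 1)) = Fin.last ℓ := rfl
    rw [hl, hF.last]
    exact fun v => le_top
  exact main ℓ (by omega) U hTU hlastle hUd

end HNUnique


section HNUnique2

variable {Q : Quiv} {k : Type} [Field k] {V : Rep Q k}

lemma top_of_top_le {X : Subrep V} (h : SubrepLE (topSub V) X) : X = topSub V :=
  Subrep.ext' fun i => top_le_iff.mp (h i)

/-- If a relative HN filtration starts at `⊤`, it has length zero. -/
lemma HNA.len_zero {θ : Q.V → ℤ} {a : Q.V → ℕ} {ℓ : ℕ}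
    {F : Fin (ℓ + 1) → Subrep V} (hF : HNA θ a (topSub V) ℓ F) : ℓ = 0 := by
  by_contra h
  have hℓ : 0 < ℓ := Nat.pos_of_ne_zero h
  have hcs0 : ((⟨0, hℓ⟩ : Fin ℓ).castSucc) = (0 : Fin (ℓ + 1)) := by ext; simp
  have h1 : F ((⟨0, hℓ⟩ : Fin ℓ).castSucc) = topSub V := by rw [hcs0, hF.zero]
  have h2 : F ((⟨0, hℓ⟩ : Fin ℓ).succ) = topSub V := by
    apply top_of_top_le
    have := hF.mono ⟨0, hℓ⟩
    rwa [h1] at this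
  exact hF.proper ⟨0, hℓ⟩ (by rw [h1, h2])

lemma hna_unique {θ : Q.V → ℤ} {a : Q.V → ℕ} (ha : ∀ i, 0 < a i) :
    ∀ (ℓ₁ : ℕ) {T : Subrep V} {ℓ₂ : ℕ} {F₁ : Fin (ℓ₁ + 1) → Subrep V}
      {F₂ : Fin (ℓ₂ + 1) → Subrep V}, HNA θ a T ℓ₁ F₁ → HNA θ a T ℓ₂ F₂ →
      ℓ₁ = ℓ₂ ∧ ∀ (i : Fin (ℓ₁ + 1)) (j : Fin (ℓ₂ + 1)), (i : ℕ) = (j : ℕ) → F₁ i = F₂ j := by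
  intro ℓ₁
  induction ℓ₁ with
  | zero =>
    intro T ℓ₂ F₁ F₂ h₁ h₂
    have hT : T = topSub V := by
      rw [← h₁.zero]
      have h0 : (0 : Fin 1) = Fin.last 0 := rfl
      rw [h0, h₁.last]
    subst hT
    have hl2 : ℓ₂ = 0 := h₂.len_zero
    subst hl2
    refine ⟨rfl, fun i j _ => ?_⟩
    have hi : i = 0 := by ext; omega
    have hj : j = 0 := by ext; omega
    rw [hi, hj, h₁.zero, h₂.zero]
  | succ m IH =>
    intro T ℓ₂ F₁ F₂ h₁ h₂
    rcases ℓ₂ with _ | m'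
    · exfalso
      have hT : T = topSub V := by
        rw [← h₂.zero]
        have h0 : (0 : Fin 1) = Fin.last 0 := rfl
        rw [h0, h₂.last]
      subst hT
      exact Nat.succ_ne_zero m h₁.len_zero
    -- both lengths positive; compare first steps
    have h1mk : (1 : Fin (m + 2)) = ⟨1, by omega⟩ := by ext; simp [Fin.val_one]
    have h1mk' : (1 : Fin (m' + 2)) = ⟨1, by omega⟩ := by ext; simp [Fin.val_one]
    -- facts about F₂'s first step
    have hcs2 : ((⟨0, by omega⟩ : Fin (m' + 1)).castSucc) = (0 : Fin (m' + 2)) := by ext; simp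
    have hT2 : SubrepLE T (F₂ ⟨1, by omega⟩) := by
      have h := h₂.mono ⟨0, by omega⟩
      rwa [hcs2, h₂.zero] at h
    have hUd2 : (F₂ ⟨1, by omega⟩).dim ≠ T.dim := by
      have h := h₂.proper ⟨0, by omega⟩
      rw [hcs2, h₂.zero] at h
      exact h.symm
    have hcs1 : ((⟨0, by omega⟩ : Fin (m + 1)).castSucc) = (0 : Fin (m + 2)) := by ext; simp
    have hT1 : SubrepLE T (F₁ ⟨1, by omega⟩) := by
      have h := h₁.mono ⟨0, by omega⟩
      rwa [hcs1, h₁.zero] at h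
    have hUd1 : (F₁ ⟨1, by omega⟩).dim ≠ T.dim := by
      have h := h₁.proper ⟨0, by omega⟩
      rw [hcs1, h₁.zero] at h
      exact h.symm
    obtain ⟨le21, eq21⟩ := h₁.key ha (by omega) (F₂ ⟨1, by omega⟩) hT2 hUd2
    obtain ⟨le12, eq12⟩ := h₂.key ha (by omega) (F₁ ⟨1, by omega⟩) hT1 hUd1
    have hsl : slopeZ θ a (quotDim T (F₂ ⟨1, by omega⟩)) =
        slopeZ θ a (quotDim T (F₁ ⟨1, by omega⟩)) := le_antisymm le21 le12
    have hEq : F₁ (1 : Fin (m + 2)) = F₂ (1 : Fin (m' + 2)) := by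
      rw [h1mk, h1mk']
      exact Subrep.ext' fun v => le_antisymm (eq12 hsl.symm v) (eq21 hsl v)
    have hT1' : HNA θ a (F₁ 1) m (fun i => F₁ i.succ) := h₁.tail
    have hT2' : HNA θ a (F₁ 1) m' (fun i => F₂ i.succ) := by
      rw [hEq]
      exact h₂.tail
    obtain ⟨hm, hpt⟩ := IH hT1' hT2'
    refine ⟨by omega, fun i j hij => ?_⟩
    rcases Fin.eq_zero_or_eq_succ i with hi0 | ⟨i', rfl⟩
    · subst hi0
      have hj0 : j = 0 := by
        ext
        rw [← hij]
        simp
      rw [hj0, h₁.zero, h₂.zero]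
    · have hjne : j ≠ 0 := by
        intro hj0
        rw [hj0] at hij
        simp [Fin.val_succ] at hij
      obtain ⟨j', rfl⟩ := Fin.eq_succ_of_ne_zero hjne
      have hval : (i' : ℕ) = (j' : ℕ) := by
        simp only [Fin.val_succ] at hij
        omega
      exact hpt i' j' hval

end HNUnique2


/-- uniqueness of the Harder–Narasimhan filtration. -/
theorem hn_filtration_unique (Q : Quiv) (k : Type) [Field k] (θ : Q.V → ℤ)
    (a : Q.V → ℕ) (ha : ∀ i, 0 < a i) (V : Rep Q k)
    (ℓ₁ ℓ₂ : ℕ) (F₁ : Fin (ℓ₁ + 1) → Subrep V) (F₂ : Fin (ℓ₂ + 1) → Subrep V)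
    (h₁ : IsHNFiltration θ a V ℓ₁ F₁) (h₂ : IsHNFiltration θ a V ℓ₂ F₂) :
    ∃ h : ℓ₁ = ℓ₂, ∀ i : Fin (ℓ₁ + 1), F₁ i = F₂ (Fin.cast (by rw [h]) i) := by
  have hna₁ : HNA θ a (botSub V) ℓ₁ F₁ :=
    ⟨h₁.zero, h₁.last, h₁.mono, h₁.proper, h₁.semistable, h₁.slopes⟩
  have hna₂ : HNA θ a (botSub V) ℓ₂ F₂ :=
    ⟨h₂.zero, h₂.last, h₂.mono, h₂.proper, h₂.semistable, h₂.slopes⟩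
  obtain ⟨h, hpt⟩ := hna_unique ha ℓ₁ hna₁ hna₂
  exact ⟨h, fun i => hpt i (Fin.cast (by rw [h]) i) (Fin.coe_cast _ _).symm⟩


end QT
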